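/- Let T = {(τ, x, z) ∈ ℝ × ℝ^d × Z : h(aᵀx) ≤ τ and x_i(1 − z_i) = 0 for all i ∈ [d]}, where Z ⊆ {0,1}^d with Z ≠ {0}, the graph G_Z is connected, a ∈ ℝ^d has a_i ≠ 0 for all i, and h : ℝ → ℝ ∪ {+∞} is proper, lower semicontinuous, convex with h(0) = 0. Define T̄ = {(τ, x, z, s, w) ∈ ℝ × ℝ^d × ℝ^d × ℝ × ℝ : h(s) ≤ τ, aᵀx = s, s(1 − w) = 0, (w, z) ∈ Δ₁}, where Δ₁ = {(w, z) ∈ {0,1} × Z : w ≤ Σ_{i∈[d]} z_i}. Then the closed convex hull of T equals the closed convex hull of the projection {(τ, x, z) : there exist s, w with (τ, x, z, s, w) ∈ T̄}. -/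

import Mathlib

open scoped Classical

private lemma aux_rec {E : Type*} [NormedAddCommGroup E] [NormedSpace ℝ E]
    (C : Set E) (hconv : Convex ℝ C) (hcl : IsClosed C)
    (p v : E) (hp : p ∈ C) (q : ℕ → E) (hq : ∀ n, q n ∈ C)
    (hlim : Filter.Tendsto (fun n : ℕ => (1 / (n + 1 : ℝ)) • q n) Filter.atTop (nhds v)) :
    p + v ∈ C := by
  have h0 : ∀ n : ℕ, (0:ℝ) < 1 / (n + 1 : ℝ) := fun n => by positivity
  have hmem : ∀ n : ℕ, (1 - 1 / (n + 1 : ℝ)) • p + (1 / (n + 1 : ℝ)) • q n ∈ C := by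
    intro n
    refine hconv hp (hq n) ?_ (le_of_lt (h0 n)) (by ring)
    have h1 : 1 / (n + 1 : ℝ) ≤ 1 := by
      rw [div_le_one (by positivity)]
      linarith [Nat.cast_nonneg (α := ℝ) n]
    linarith
  have hconst : Filter.Tendsto (fun n : ℕ => 1 / (n + 1 : ℝ)) Filter.atTop (nhds 0) :=
    tendsto_one_div_add_atTop_nhds_zero_nat
  have h1 : Filter.Tendsto (fun n : ℕ => (1 - 1 / (n + 1 : ℝ)) • p) Filter.atTop (nhds p) := by
    have := ((tendsto_const_nhds (x := (1:ℝ)) (f := Filter.atTop (α := ℕ))).sub hconst).smul_const p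
    simpa using this
  exact hcl.mem_of_tendsto (h1.add hlim) (Filter.Eventually.of_forall hmem)

private def Wvec {d : ℕ} (a : Fin d → ℝ) (i j : Fin d) : Fin d → ℝ :=
  fun k => (if k = i then a j else 0) - (if k = j then a i else 0)

private lemma Wvec_sum {d : ℕ} (a : Fin d → ℝ) (i j : Fin d) :
    ∑ k, a k * Wvec a i j k = 0 := by
  simp only [Wvec, mul_sub, Finset.sum_sub_distrib, mul_ite, mul_zero]
  rw [Finset.sum_ite_eq' Finset.univ i (fun k => a k * a j),
      Finset.sum_ite_eq' Finset.univ j (fun k => a k * a i)]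
  simp [mul_comm]

private lemma Wvec_self {d : ℕ} (a : Fin d → ℝ) (i : Fin d) : Wvec a i i = 0 := by
  funext m; simp [Wvec]

private lemma Wvec_split {d : ℕ} (a : Fin d → ℝ) (i k j : Fin d) (c : ℝ) (hak : a k ≠ 0) :
    c • Wvec a i j = ((c * a j) / a k) • Wvec a i k + ((c * a i) / a k) • Wvec a k j := by
  funext m
  simp only [Wvec, Pi.add_apply, Pi.smul_apply, smul_eq_mul]
  split_ifs <;> field_simp <;> ring

private lemma Wvec_decomp {d : ℕ} (a : Fin d → ℝ) (ha : ∀ i, a i ≠ 0) (v : Fin d → ℝ)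
    (hv : ∑ i, a i * v i = 0) (i0 : Fin d) :
    v = ∑ i, (v i / a i0) • Wvec a i i0 := by
  funext m
  rw [Finset.sum_apply]
  simp only [Wvec, Pi.smul_apply, smul_eq_mul, mul_sub, Finset.sum_sub_distrib,
    mul_ite, mul_zero]
  rw [Finset.sum_ite_eq Finset.univ m (fun i => v i / a i0 * a i0)]
  by_cases hm : m = i0
  · subst hm
    simp only [if_pos (Finset.mem_univ m), if_pos rfl, if_true]
    have h2 : ∑ i, v i / a m * a i = (∑ i, a i * v i) / a m := by
      rw [Finset.sum_div]
      exact Finset.sum_congr rfl fun i _ => by field_simp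
    rw [h2, hv, zero_div, sub_zero, div_mul_cancel₀ _ (ha m)]
  · simp only [if_pos (Finset.mem_univ m), if_neg hm, if_false, Finset.sum_const_zero]
    rw [sub_zero, div_mul_cancel₀ _ (ha i0)]

/-- The graph `G_Z` on `[d]` associated with `Z ⊆ {0,1}^d`. -/
def graphOfZ {d : ℕ} (Z : Set (Fin d → ℝ)) : SimpleGraph (Fin d) :=
  SimpleGraph.fromRel (fun i j => ∃ z ∈ Z, z i = 1 ∧ z j = 1)

/-- `cl conv(T)` equals the closed convex hull of the projection of the lifted set `T̄`,
in which all individual complementarity constraints are replaced by a single one,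
`s(1 - w) = 0` with `(w, z) ∈ Δ₁ = {(w, z) ∈ {0,1} × Z : w ≤ 1ᵀz}`. -/
theorem clconv_T_eq_clconv_proj_Tbar {d : ℕ}
    (Z : Set (Fin d → ℝ)) (hZ01 : ∀ z ∈ Z, ∀ i, z i = 0 ∨ z i = 1)
    (hZne : Z ≠ {0}) (hconn : (graphOfZ Z).Connected)
    (a : Fin d → ℝ) (ha : ∀ i, a i ≠ 0)
    (h : ℝ → EReal)
    (hbot : ∀ x : ℝ, h x ≠ ⊥) (hnetop : ∃ x : ℝ, h x ≠ ⊤)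
    (hlsc : LowerSemicontinuous h)
    (hconv : Convex ℝ {u : ℝ × ℝ | h u.2 ≤ (u.1 : EReal)})
    (h0 : h 0 = 0) :
    closure (convexHull ℝ
      {p : ℝ × (Fin d → ℝ) × (Fin d → ℝ) |
        p.2.2 ∈ Z ∧ h (∑ i, a i * p.2.1 i) ≤ (p.1 : EReal) ∧
        ∀ i, p.2.1 i * (1 - p.2.2 i) = 0})
      = closure (convexHull ℝ
        {p : ℝ × (Fin d → ℝ) × (Fin d → ℝ) | ∃ s w : ℝ,
          h s ≤ (p.1 : EReal) ∧ (∑ i, a i * p.2.1 i) = s ∧ s * (1 - w) = 0 ∧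
          (w = 0 ∨ w = 1) ∧ p.2.2 ∈ Z ∧ w ≤ ∑ i, p.2.2 i}) := by
  set T : Set (ℝ × (Fin d → ℝ) × (Fin d → ℝ)) :=
    {p : ℝ × (Fin d → ℝ) × (Fin d → ℝ) |
        p.2.2 ∈ Z ∧ h (∑ i, a i * p.2.1 i) ≤ (p.1 : EReal) ∧
        ∀ i, p.2.1 i * (1 - p.2.2 i) = 0} with hTdef
  set Pset : Set (ℝ × (Fin d → ℝ) × (Fin d → ℝ)) :=
    {p : ℝ × (Fin d → ℝ) × (Fin d → ℝ) | ∃ s w : ℝ,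
          h s ≤ (p.1 : EReal) ∧ (∑ i, a i * p.2.1 i) = s ∧ s * (1 - w) = 0 ∧
          (w = 0 ∨ w = 1) ∧ p.2.2 ∈ Z ∧ w ≤ ∑ i, p.2.2 i} with hPdef
  set C := closure (convexHull ℝ T) with hCdef
  have hCconv : Convex ℝ C := (convex_convexHull ℝ T).closure
  have hCcl : IsClosed C := isClosed_closure
  have hTC : T ⊆ C := (subset_convexHull ℝ T).trans subset_closure
  -- Step 1: edge directions are "free"
  have hedge : ∀ i j : Fin d, (∃ z ∈ Z, z i = 1 ∧ z j = 1) →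
      ∀ (c : ℝ), ∀ p ∈ C, p + ((0:ℝ), c • Wvec a i j, (0 : Fin d → ℝ)) ∈ C := by
    rintro i j ⟨z', hz', hzi, hzj⟩ c p hp
    refine aux_rec C hCconv hCcl p ((0:ℝ), c • Wvec a i j, (0 : Fin d → ℝ)) hp
      (fun n => ((0:ℝ), ((n + 1 : ℝ) * c) • Wvec a i j, z')) ?_ ?_
    · intro n
      apply hTC
      refine ⟨hz', ?_, ?_⟩
      · have hsum0 : ∑ k, a k * (((n + 1 : ℝ) * c) • Wvec a i j) k = 0 := by
          have : ∀ k, a k * (((n + 1 : ℝ) * c) • Wvec a i j) k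
              = ((n + 1 : ℝ) * c) * (a k * Wvec a i j k) := fun k => by
            simp [Pi.smul_apply, smul_eq_mul]; ring
          rw [Finset.sum_congr rfl fun k _ => this k, ← Finset.mul_sum, Wvec_sum, mul_zero]
        rw [hsum0, h0]
        show (0 : EReal) ≤ (((0:ℝ)) : EReal)
        simp
      · intro k
        by_cases hk : k = i
        · subst hk; simp [hzi]
        · by_cases hk2 : k = j
          · subst hk2; simp [hzj]
          · simp [Wvec, hk, hk2]
    · have heq : (fun n : ℕ => (1 / (n + 1 : ℝ)) •
          (((0:ℝ), ((n + 1 : ℝ) * c) • Wvec a i j, z') : ℝ × (Fin d → ℝ) × (Fin d → ℝ)))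
          = fun n : ℕ => ((0:ℝ), c • Wvec a i j, (1 / (n + 1 : ℝ)) • z') := by
        funext n
        have hne : (n + 1 : ℝ) ≠ 0 := by positivity
        simp only [Prod.smul_mk, smul_zero, smul_smul]
        congr 2
        rw [one_div, inv_mul_cancel_left₀ hne]
      rw [heq]
      have h3 : Filter.Tendsto (fun n : ℕ => (1 / (n + 1 : ℝ)) • z') Filter.atTop
          (nhds (0 : Fin d → ℝ)) := by
        have := (tendsto_one_div_add_atTop_nhds_zero_nat (𝕜 := ℝ)).smul_const z'
        simpa using this
      exact (tendsto_const_nhds.prodMk_nhds (tendsto_const_nhds.prodMk_nhds h3))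
  -- Step 2: walk directions
  have hwalk : ∀ (i j : Fin d) (_ : (graphOfZ Z).Walk i j) (c : ℝ), ∀ p ∈ C,
      p + ((0:ℝ), c • Wvec a i j, (0 : Fin d → ℝ)) ∈ C := by
    intro i j w
    induction w with
    | nil =>
      intro c p hp
      simpa [Wvec_self, Prod.mk_zero_zero] using hp
    | @cons i k j hadj w ih =>
      intro c p hp
      have hexists : ∃ z ∈ Z, z i = 1 ∧ z k = 1 := by
        rw [graphOfZ, SimpleGraph.fromRel_adj] at hadj
        rcases hadj.2 with ⟨z, hz, h1, h2⟩ | ⟨z, hz, h1, h2⟩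
        · exact ⟨z, hz, h1, h2⟩
        · exact ⟨z, hz, h2, h1⟩
      rw [Wvec_split a i k j c (ha k)]
      have heq : ((0:ℝ), ((c * a j) / a k) • Wvec a i k + ((c * a i) / a k) • Wvec a k j,
          (0 : Fin d → ℝ))
          = ((0:ℝ), ((c * a j) / a k) • Wvec a i k, (0 : Fin d → ℝ))
            + ((0:ℝ), ((c * a i) / a k) • Wvec a k j, (0 : Fin d → ℝ)) := by
        simp
      rw [heq, ← add_assoc]
      exact ih _ _ (hedge i k hexists _ p hp)
  -- Step 3: all directions v with aᵀv = 0 are free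
  have hV : ∀ v : Fin d → ℝ, (∑ i, a i * v i) = 0 → ∀ p ∈ C,
      p + ((0:ℝ), v, (0 : Fin d → ℝ)) ∈ C := by
    intro v hv p hp
    obtain ⟨i0⟩ := hconn.nonempty
    have hdec := Wvec_decomp a ha v hv i0
    rw [hdec]
    clear hdec hv
    have hgen : ∀ s : Finset (Fin d), ∀ p ∈ C,
        p + ((0:ℝ), ∑ i ∈ s, (v i / a i0) • Wvec a i i0, (0 : Fin d → ℝ)) ∈ C := by
      intro s
      induction s using Finset.induction_on with
      | empty => intro p hp; simpa [Prod.mk_zero_zero] using hp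
      | @insert i s hnot ihs =>
        intro p hp
        rw [Finset.sum_insert hnot]
        have heq : ((0:ℝ), (v i / a i0) • Wvec a i i0 + ∑ j ∈ s, (v j / a i0) • Wvec a j i0,
            (0 : Fin d → ℝ))
            = ((0:ℝ), (v i / a i0) • Wvec a i i0, (0 : Fin d → ℝ))
              + ((0:ℝ), ∑ j ∈ s, (v j / a i0) • Wvec a j i0, (0 : Fin d → ℝ)) := by simp
        rw [heq, ← add_assoc]
        exact ihs _ (hwalk i i0 (hconn.preconnected i i0).some _ p hp)
    exact hgen Finset.univ p hp
  -- Direction A: T ⊆ Pset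
  have hTP : T ⊆ Pset := by
    rintro ⟨τ, x, z⟩ ⟨hzZ, hh, hcompl⟩
    dsimp only at hzZ hh hcompl
    show ∃ s w : ℝ, h s ≤ (τ : EReal) ∧ (∑ i, a i * x i) = s ∧ s * (1 - w) = 0 ∧
      (w = 0 ∨ w = 1) ∧ z ∈ Z ∧ w ≤ ∑ i, z i
    by_cases hz0 : ∀ i, z i = 0
    · have hx0 : ∀ i, x i = 0 := by
        intro i
        have := hcompl i
        rw [hz0 i] at this
        simpa using this
      have hsum0 : ∑ i, a i * x i = 0 :=
        Finset.sum_eq_zero fun i _ => by rw [hx0 i, mul_zero]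
      refine ⟨0, 0, ?_, hsum0, by ring, Or.inl rfl, hzZ, ?_⟩
      · rw [hsum0] at hh
        exact hh
      · have hz : ∑ i, z i = 0 := Finset.sum_eq_zero fun i _ => hz0 i
        rw [hz]
    · push_neg at hz0
      obtain ⟨i, hi⟩ := hz0
      have hzi1 : z i = 1 := (hZ01 z hzZ i).resolve_left hi
      refine ⟨∑ j, a j * x j, 1, hh, rfl, by ring, Or.inr rfl, hzZ, ?_⟩
      have hnn : ∀ j ∈ Finset.univ, (0:ℝ) ≤ z j := by
        intro j _
        rcases hZ01 z hzZ j with hj | hj <;> rw [hj] <;> norm_num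
      calc (1:ℝ) = z i := hzi1.symm
        _ ≤ ∑ j, z j := Finset.single_le_sum hnn (Finset.mem_univ i)
  -- Direction B: Pset ⊆ C
  have hPC : Pset ⊆ C := by
    rintro ⟨τ, x, z⟩ ⟨s, w, hhs, hsumeq, hsw, hw01, hzZ, hwle⟩
    dsimp only at hhs hsumeq hzZ hwle
    rcases hw01 with hw0 | hw1
    · -- w = 0 ⇒ s = 0
      have hs0 : s = 0 := by rw [hw0] at hsw; simpa using hsw
      have hp0 : ((τ, 0, z) : ℝ × (Fin d → ℝ) × (Fin d → ℝ)) ∈ T := by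
        refine ⟨hzZ, ?_, fun i => by simp⟩
        show h (∑ i, a i * (0 : Fin d → ℝ) i) ≤ (τ : EReal)
        have hz : ∑ i, a i * (0 : Fin d → ℝ) i = 0 := by simp
        rw [hz, ← hs0]
        exact hhs
      have hv : ∑ i, a i * x i = 0 := by rw [hsumeq, hs0]
      have := hV x hv _ (hTC hp0)
      simpa using this
    · -- w = 1
      have hex : ∃ i, z i = 1 := by
        by_contra hno
        push_neg at hno
        have hz0 : ∀ i, z i = 0 := fun i => (hZ01 z hzZ i).resolve_right (hno i)
        rw [hw1] at hwle
        have : ∑ i, z i = 0 := by simp [Finset.sum_congr rfl fun i _ => hz0 i]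
        rw [this] at hwle
        linarith
      obtain ⟨i, hzi⟩ := hex
      set x0 : Fin d → ℝ := fun k => if k = i then s / a i else 0 with hx0def
      have hx0sum : ∑ k, a k * x0 k = s := by
        simp only [hx0def, mul_ite, mul_zero]
        rw [Finset.sum_ite_eq' Finset.univ i (fun k => a k * (s / a i))]
        simp only [Finset.mem_univ, if_true]
        rw [mul_comm, div_mul_cancel₀ _ (ha i)]
      have hp0 : ((τ, x0, z) : ℝ × (Fin d → ℝ) × (Fin d → ℝ)) ∈ T := by
        refine ⟨hzZ, ?_, ?_⟩
        · show h (∑ k, a k * x0 k) ≤ (τ : EReal)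
          rw [hx0sum]; exact hhs
        intro k
        by_cases hk : k = i
        · subst hk; simp [hx0def, hzi]
        · simp [hx0def, hk]
      have hv : ∑ k, a k * (x - x0) k = 0 := by
        have : ∀ k, a k * (x - x0) k = a k * x k - a k * x0 k := fun k => by
          simp [mul_sub]
        rw [Finset.sum_congr rfl fun k _ => this k, Finset.sum_sub_distrib, hsumeq, hx0sum,
          sub_self]
      have hmem := hV (x - x0) hv _ (hTC hp0)
      have : ((τ, x0, z) : ℝ × (Fin d → ℝ) × (Fin d → ℝ)) + ((0:ℝ), x - x0, (0 : Fin d → ℝ))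
          = (τ, x, z) := by simp
      rwa [this] at hmem
  -- conclude
  apply Set.Subset.antisymm
  · exact closure_mono (convexHull_mono hTP)
  · exact closure_minimal (convexHull_min hPC hCconv) hCcl
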